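/- Let r ≥ 4 and let G be a (K_r, K_r[n])-partite-extra-saturated graph with n ≥ 3. Then every vertex of G has degree at least r−1. -/

import Mathlib

open SimpleGraph

/-- The blow-up `H[n]` of a graph `H` onto parts of size `n`: each vertex of `H` is
replaced by an independent set of size `n`, each edge by a complete bipartite graph. -/
def blowup {V : Type*} (H : SimpleGraph V) (n : ℕ) : SimpleGraph (V × Fin n) :=
  SimpleGraph.comap Prod.fst H

/-- `f` selects one vertex in each part of the blow-up, forming a partite copy of `H` in `G`. -/
def IsPartiteCopy {V : Type*} {n : ℕ} (H : SimpleGraph V) (G : SimpleGraph (V × Fin n))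
    (f : V → Fin n) : Prop :=
  ∀ ⦃u v : V⦄, H.Adj u v → G.Adj (u, f u) (v, f v)

/-- `G ⊆ H[n]` is `(H,H[n])`-partite-saturated: it has no partite copy of `H`, but adding
any edge of `H[n]` not in `G` creates a partite copy of `H`. -/
def PartiteSaturated {V : Type*} {n : ℕ} (H : SimpleGraph V)
    (G : SimpleGraph (V × Fin n)) : Prop :=
  G ≤ blowup H n ∧ (¬ ∃ f, IsPartiteCopy H G f) ∧
    ∀ ⦃x y : V × Fin n⦄, (blowup H n).Adj x y → ¬ G.Adj x y →
      ∃ f, IsPartiteCopy H (G ⊔ SimpleGraph.fromEdgeSet {s(x, y)}) f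

/-- The degree of a vertex. -/
noncomputable def deg {α : Type*} (G : SimpleGraph α) (v : α) : ℕ := (G.neighborSet v).ncard

/-- `G ⊆ H[n]` is `(H,H[n])`-partite-extra-saturated: adding any edge of `H[n]` not in
`G` strictly increases the number of partite copies of `H`. -/
def ExtraSaturated {V : Type*} {n : ℕ} (H : SimpleGraph V)
    (G : SimpleGraph (V × Fin n)) : Prop :=
  G ≤ blowup H n ∧
    ∀ ⦃x y : V × Fin n⦄, (blowup H n).Adj x y → ¬ G.Adj x y →
      Nat.card {f : V → Fin n // IsPartiteCopy H G f} <
        Nat.card {f : V → Fin n //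
          IsPartiteCopy H (G ⊔ SimpleGraph.fromEdgeSet {s(x, y)}) f}

/-- For `r ≥ 4` and `n ≥ 3`, every vertex of a `(K_r,K_r[n])`-partite-extra-saturated
graph has degree at least `r - 1`. -/
theorem stmt_16 (r n : ℕ) (hr : 4 ≤ r) (hn : 3 ≤ n)
    (G : SimpleGraph (Fin r × Fin n))
    (hG : ExtraSaturated (⊤ : SimpleGraph (Fin r)) G) :
    ∀ v : Fin r × Fin n, r - 1 ≤ deg G v := by
  classical
  obtain ⟨hle, hsat⟩ := hG
  rintro ⟨i, a⟩
  by_contra hdeg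
  push_neg at hdeg
  set v : Fin r × Fin n := (i, a) with hv
  have hfin : (G.neighborSet v).toFinset.card ≤ r - 2 := by
    have : deg G v = (G.neighborSet v).toFinset.card := Set.ncard_eq_toFinset_card' _
    omega
  have hn0 : 0 < n := by omega
  -- Step 1: some part `j ≠ i` contains no neighbor of `v`.
  have hstep1 : ∃ j : Fin r, j ≠ i ∧ ∀ b : Fin n, ¬ G.Adj v (j, b) := by
    by_contra hc
    push_neg at hc
    have hc' : ∀ j : Fin r, ∃ b : Fin n, j ≠ i → G.Adj v (j, b) := by
      intro j
      by_cases hj : j = i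
      · exact ⟨⟨0, hn0⟩, fun h => absurd hj h⟩
      · obtain ⟨b, hb⟩ := hc j hj; exact ⟨b, fun _ => hb⟩
    choose b hb using hc'
    have hinj : ({i}ᶜ : Finset (Fin r)).card ≤ (G.neighborSet v).toFinset.card := by
      apply Finset.card_le_card_of_injOn (fun j => (j, b j))
      · intro j hj
        simp only [Finset.mem_coe, Finset.mem_compl, Finset.mem_singleton] at hj
        simpa [Set.mem_toFinset] using hb j hj
      · intro x _ y _ hxy
        exact congrArg Prod.fst hxy
    rw [Finset.card_compl, Finset.card_singleton, Fintype.card_fin] at hinj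
    omega
  obtain ⟨j, hji, hj⟩ := hstep1
  -- Step 2: a non-neighbor `(k, c)` of `v` with `k ∉ {i, j}`.
  have hstep2 : ∃ (k : Fin r) (c : Fin n), k ≠ i ∧ k ≠ j ∧ ¬ G.Adj v (k, c) := by
    by_contra hc
    push_neg at hc
    have hsub : (({i, j}ᶜ : Finset (Fin r)) ×ˢ (Finset.univ : Finset (Fin n)))
        ⊆ (G.neighborSet v).toFinset := by
      rintro ⟨k, c⟩ hk
      simp only [Finset.mem_product, Finset.mem_compl, Finset.mem_insert,
        Finset.mem_singleton] at hk
      push_neg at hk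
      simpa [Set.mem_toFinset] using hc k c hk.1.1 hk.1.2
    have hcard := Finset.card_le_card hsub
    have h2 : ({i, j} : Finset (Fin r)).card = 2 := by
      rw [Finset.card_insert_of_notMem (by simpa using hji.symm), Finset.card_singleton]
    rw [Finset.card_product, Finset.card_compl, Finset.card_univ, Fintype.card_fin,
      Fintype.card_fin, h2] at hcard
    have hmul : (r - 2) * 3 ≤ (r - 2) * n := Nat.mul_le_mul_left _ hn
    omega
  obtain ⟨k, c, hki, hkj, hkc⟩ := hstep2
  set y : Fin r × Fin n := (k, c) with hy
  have hbadj : (blowup (⊤ : SimpleGraph (Fin r)) n).Adj v y := by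
    show (⊤ : SimpleGraph (Fin r)).Adj i k
    simp [Ne.symm hki]
  have hlt := hsat hbadj hkc
  set e := SimpleGraph.fromEdgeSet {s(v, y)} with he
  have hiff : ∀ f : Fin r → Fin n, IsPartiteCopy ⊤ G f ↔ IsPartiteCopy ⊤ (G ⊔ e) f := by
    intro f
    constructor
    · intro hf u w huw
      exact Or.inl (hf huw)
    · intro hf
      have hfi : (i, f i) ≠ v := by
        intro hfi
        have h1 : (G ⊔ e).Adj (i, f i) (j, f j) := hf (by simp [Ne.symm hji])
        rw [hfi] at h1
        rcases h1 with h1 | h1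
        · exact hj _ h1
        · rw [he, SimpleGraph.fromEdgeSet_adj] at h1
          obtain ⟨h2, -⟩ := h1
          rw [Set.mem_singleton_iff, Sym2.eq_iff] at h2
          rcases h2 with ⟨-, h4⟩ | ⟨h3, -⟩
          · exact hkj (congrArg Prod.fst h4).symm
          · exact hki (congrArg Prod.fst h3).symm
      intro u w huw
      rcases hf huw with h1 | h1
      · exact h1
      · exfalso
        rw [he, SimpleGraph.fromEdgeSet_adj] at h1
        obtain ⟨h2, -⟩ := h1
        rw [Set.mem_singleton_iff, Sym2.eq_iff] at h2
        rcases h2 with ⟨h3, -⟩ | ⟨-, h3⟩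
        · have hu : u = i := congrArg Prod.fst h3
          subst hu
          exact hfi h3
        · have hw : w = i := congrArg Prod.fst h3
          subst hw
          exact hfi h3
  have hcongr : Nat.card {f : Fin r → Fin n // IsPartiteCopy ⊤ G f} =
      Nat.card {f : Fin r → Fin n // IsPartiteCopy ⊤ (G ⊔ e) f} :=
    Nat.card_congr (Equiv.subtypeEquivRight hiff)
  omega
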